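/- arXiv:1510.03965 — 2 statements merged into one kernel-verified Lean document; each statement's English description precedes it below -/
import Mathlib

section
/- Let N ≥ 3. Define, for R ≥ 1 and λ₁, λ₂ > 0 with λ := λ₁/λ₂ ≤ 1, the function D : ℝ^N → ℝ by D(x) = −λ₁^{-N/2}(ΛW)(x/λ₁) − ((N−2)/2)(λ₁ + R²λ₂/(N(N−2)))^{-N/2} for |x| < R√(λ₁λ₂), and D(x) = 0 for |x| ≥ R√(λ₁λ₂) (D is the pointwise derivative ∂_{λ₁}V_R(λ₁,λ₂) off the truncation sphere). Then there exists a constant C > 0 depending only on N such that ∫_{ℝ^N} |D(x)| dx ≤ C R² λ₂^{N/2} λ^{(N−2)/2}. -/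
open MeasureTheory Real

noncomputable def groundW (N : ℕ) (x : EuclideanSpace ℝ (Fin N)) : ℝ :=
  (1 + ‖x‖ ^ 2 / ((N : ℝ) * ((N : ℝ) - 2))) ^ (-(((N : ℝ) - 2) / 2))

/-- The generator of scaling `ΛW(x) = ((N-2)/2) W(x) + x·∇W(x)`. -/
noncomputable def LamW (N : ℕ) (x : EuclideanSpace ℝ (Fin N)) : ℝ :=
  ((N : ℝ) - 2) / 2 * groundW N x + fderiv ℝ (groundW N) x x

/-- The pointwise derivative `∂_{λ₁} V_R(λ₁, λ₂)` off the truncation sphere. -/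
noncomputable def Dfun (N : ℕ) (R l1 l2 : ℝ) (x : EuclideanSpace ℝ (Fin N)) : ℝ :=
  if ‖x‖ < R * Real.sqrt (l1 * l2) then
    -(l1 ^ (-((N : ℝ) / 2)) * LamW N (l1⁻¹ • x)) -
      ((N : ℝ) - 2) / 2 * (l1 + R ^ 2 * l2 / ((N : ℝ) * ((N : ℝ) - 2))) ^ (-((N : ℝ) / 2))
  else 0

lemma groundW_hasFDerivAt (N : ℕ) (hN : 3 ≤ N) (x : EuclideanSpace ℝ (Fin N)) :
    HasFDerivAt (groundW N)
      ((-(((N : ℝ) - 2) / 2) * (1 + ‖x‖ ^ 2 / ((N : ℝ) * ((N : ℝ) - 2))) ^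
          (-(((N : ℝ) - 2) / 2) - 1)) •
        (((N : ℝ) * ((N : ℝ) - 2))⁻¹ • (2 • (innerSL ℝ x)))) x := by
  have hN3 : (3 : ℝ) ≤ (N : ℝ) := by exact_mod_cast hN
  have hc : (0 : ℝ) < (N : ℝ) * ((N : ℝ) - 2) := by nlinarith
  set c : ℝ := (N : ℝ) * ((N : ℝ) - 2) with hcdef
  have h1 : HasFDerivAt (fun x : EuclideanSpace ℝ (Fin N) => ‖x‖ ^ 2)
      (2 • (innerSL ℝ x)) x := (hasStrictFDerivAt_norm_sq x).hasFDerivAt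
  have h2 : HasFDerivAt (fun x : EuclideanSpace ℝ (Fin N) => 1 + ‖x‖ ^ 2 / c)
      (c⁻¹ • (2 • (innerSL ℝ x))) x := by
    have h2' := (h1.const_smul c⁻¹).const_add 1
    have heq : (fun x : EuclideanSpace ℝ (Fin N) => 1 + c⁻¹ • ‖x‖ ^ 2)
        = (fun x : EuclideanSpace ℝ (Fin N) => 1 + ‖x‖ ^ 2 / c) := by
      funext y; rw [smul_eq_mul]; ring
    simp only [Pi.smul_apply] at h2'
    rwa [heq] at h2'
  have hu : (0 : ℝ) < 1 + ‖x‖ ^ 2 / c := by positivity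
  have h3 : HasDerivAt (fun t : ℝ => t ^ (-(((N : ℝ) - 2) / 2)))
      ((-(((N : ℝ) - 2) / 2)) * (1 + ‖x‖ ^ 2 / c) ^ (-(((N : ℝ) - 2) / 2) - 1))
      (1 + ‖x‖ ^ 2 / c) := Real.hasDerivAt_rpow_const (Or.inl hu.ne')
  exact h3.comp_hasFDerivAt x h2

lemma LamW_eq (N : ℕ) (hN : 3 ≤ N) (x : EuclideanSpace ℝ (Fin N)) :
    LamW N x =
      -(((N : ℝ) - 2) / 2) * (1 + ‖x‖ ^ 2 / ((N : ℝ) * ((N : ℝ) - 2))) ^ (-(((N : ℝ) - 2) / 2))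
      + (((N : ℝ) - 2)) * (1 + ‖x‖ ^ 2 / ((N : ℝ) * ((N : ℝ) - 2))) ^
          (-(((N : ℝ) - 2) / 2) - 1) := by
  have hN3 : (3 : ℝ) ≤ (N : ℝ) := by exact_mod_cast hN
  have hc : (0 : ℝ) < (N : ℝ) * ((N : ℝ) - 2) := by nlinarith
  set c : ℝ := (N : ℝ) * ((N : ℝ) - 2) with hcdef
  set p : ℝ := ((N : ℝ) - 2) / 2 with hpdef
  set u : ℝ := 1 + ‖x‖ ^ 2 / c with hudef
  have hu : (0 : ℝ) < u := by positivity
  have hfd := (groundW_hasFDerivAt N hN x).fderiv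
  have happ : fderiv ℝ (groundW N) x x = (-p * u ^ (-p - 1)) * (c⁻¹ * (2 * ‖x‖ ^ 2)) := by
    rw [hfd]
    simp only [ContinuousLinearMap.smul_apply, innerSL_apply_apply, real_inner_self_eq_norm_sq,
      smul_eq_mul, nsmul_eq_mul, Nat.cast_ofNat]
    try ring
  have hkey : u ^ (-p - 1) * u = u ^ (-p) := by
    have h := Real.rpow_add hu (-p - 1) 1
    rw [Real.rpow_one] at h
    rw [← h]
    norm_num
  have hx2 : ‖x‖ ^ 2 / c = u - 1 := by rw [hudef]; ring
  rw [LamW, happ, groundW]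
  have : c⁻¹ * (2 * ‖x‖ ^ 2) = 2 * (u - 1) := by
    rw [← hx2]; field_simp
  rw [this]
  have expand : -p * u ^ (-p - 1) * (2 * (u - 1))
      = -2 * p * (u ^ (-p - 1) * u) + 2 * p * u ^ (-p - 1) := by ring
  rw [expand, hkey]
  show p * u ^ (-p) + _ = -p * u ^ (-p) + ((N : ℝ) - 2) * u ^ (-p - 1)
  have : ((N : ℝ) - 2) = 2 * p := by rw [hpdef]; ring
  rw [this]; ring

lemma abs_LamW_le (N : ℕ) (hN : 3 ≤ N) (x : EuclideanSpace ℝ (Fin N)) :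
    |LamW N x| ≤ 3 * (((N : ℝ) - 2) / 2) *
      (1 + ‖x‖ ^ 2 / ((N : ℝ) * ((N : ℝ) - 2))) ^ (-(((N : ℝ) - 2) / 2)) := by
  have hN3 : (3 : ℝ) ≤ (N : ℝ) := by exact_mod_cast hN
  have hc : (0 : ℝ) < (N : ℝ) * ((N : ℝ) - 2) := by nlinarith
  set c : ℝ := (N : ℝ) * ((N : ℝ) - 2) with hcdef
  set p : ℝ := ((N : ℝ) - 2) / 2 with hpdef
  have hp : 0 < p := by rw [hpdef]; linarith
  set u : ℝ := 1 + ‖x‖ ^ 2 / c with hudef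
  have hu1 : (1 : ℝ) ≤ u := by
    rw [hudef]; nlinarith [sq_nonneg ‖x‖, hc, div_nonneg (sq_nonneg ‖x‖) hc.le]
  have hupos : (0 : ℝ) < u := lt_of_lt_of_le one_pos hu1
  have h1 : (0 : ℝ) < u ^ (-p) := Real.rpow_pos_of_pos hupos _
  have h2 : (0 : ℝ) < u ^ (-p - 1) := Real.rpow_pos_of_pos hupos _
  have hle : u ^ (-p - 1) ≤ u ^ (-p) :=
    Real.rpow_le_rpow_of_exponent_le hu1 (by linarith)
  rw [LamW_eq N hN x]
  rw [abs_le]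
  constructor <;> nlinarith [abs_nonneg (LamW N x)]


set_option maxHeartbeats 2000000 in
theorem deriv_truncated_bubble_L1_estimate (N : ℕ) (hN : 3 ≤ N) :
    ∃ C > (0 : ℝ), ∀ R ≥ (1 : ℝ), ∀ l1 l2 : ℝ, 0 < l1 → 0 < l2 → l1 / l2 ≤ 1 →
      (∫ x, |Dfun N R l1 l2 x|) ≤
        C * R ^ 2 * l2 ^ ((N : ℝ) / 2) * (l1 / l2) ^ (((N : ℝ) - 2) / 2) := by
  have hN3 : (3 : ℝ) ≤ (N : ℝ) := by exact_mod_cast hN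
  have hc : (0 : ℝ) < (N : ℝ) * ((N : ℝ) - 2) := by nlinarith
  set c : ℝ := (N : ℝ) * ((N : ℝ) - 2) with hcdef
  set p : ℝ := ((N : ℝ) - 2) / 2 with hpdef
  have hp : 0 < p := by rw [hpdef]; linarith
  haveI : Nontrivial (EuclideanSpace ℝ (Fin N)) :=
    Module.nontrivial_of_finrank_pos (R := ℝ) (by rw [finrank_euclideanSpace_fin]; omega)
  set v : ℝ := (volume (Metric.ball (0 : EuclideanSpace ℝ (Fin N)) 1)).toReal with hvdef
  have hv : 0 ≤ v := ENNReal.toReal_nonneg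
  set K1 : ℝ := (N : ℝ) * v * (3 * p * c ^ p) / 2 with hK1def
  set K2 : ℝ := v * p * c ^ ((N : ℝ) / 2) with hK2def
  have hK1 : 0 ≤ K1 := by
    rw [hK1def]
    have : (0:ℝ) ≤ 3 * p * c ^ p := by positivity
    have hN0 : (0:ℝ) ≤ (N:ℝ) := by positivity
    positivity
  have hK2 : 0 ≤ K2 := by
    rw [hK2def]
    have : (0:ℝ) < c ^ ((N:ℝ)/2) := Real.rpow_pos_of_pos hc _
    positivity
  refine ⟨K1 + K2 + 1, by linarith, ?_⟩
  intro R hR l1 l2 hl1 hl2 hll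
  have hR0 : (0 : ℝ) < R := lt_of_lt_of_le one_pos hR
  have hl12 : l1 ≤ l2 := (div_le_one hl2).mp hll
  set ρ : ℝ := R * Real.sqrt (l1 * l2) with hρdef
  have hρ : 0 < ρ := by
    rw [hρdef]; positivity
  set ζ : ℝ := (l1 + R ^ 2 * l2 / c) ^ (-((N : ℝ) / 2)) with hζdef
  have hbase : (0:ℝ) < l1 + R ^ 2 * l2 / c := by positivity
  have hζpos : 0 < ζ := Real.rpow_pos_of_pos hbase _
  set A'' : ℝ := 3 * p * c ^ p * (l1 ^ (-((N : ℝ) / 2)) * l1 ^ ((N : ℝ) - 2)) with hA''def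
  set f : ℝ → ℝ := fun r =>
    if r < ρ then l1 ^ (-((N : ℝ) / 2)) * (3 * p * (1 + (r / l1) ^ 2 / c) ^ (-p)) + p * ζ
    else 0 with hfdef
  -- pointwise bound
  have hpt : ∀ x : EuclideanSpace ℝ (Fin N), |Dfun N R l1 l2 x| ≤ f ‖x‖ := by
    intro x
    by_cases hx : ‖x‖ < ρ
    · have hx' : ‖x‖ < R * Real.sqrt (l1 * l2) := hx
      simp only [hfdef, if_pos hx]
      simp only [Dfun]
      rw [if_pos hx', ← hcdef, ← hpdef, ← hζdef]
      have hnorm : ‖(l1⁻¹ • x : EuclideanSpace ℝ (Fin N))‖ = ‖x‖ / l1 := by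
        rw [norm_smul, norm_inv, Real.norm_eq_abs, abs_of_pos hl1, inv_mul_eq_div]
      have hL := abs_LamW_le N hN (l1⁻¹ • x)
      rw [hnorm, ← hcdef, ← hpdef] at hL
      have hA0 : (0:ℝ) < l1 ^ (-((N:ℝ)/2)) := Real.rpow_pos_of_pos hl1 _
      calc |(-(l1 ^ (-((N : ℝ) / 2)) * LamW N (l1⁻¹ • x)) - p * ζ)|
          ≤ |(-(l1 ^ (-((N : ℝ) / 2)) * LamW N (l1⁻¹ • x)))| + |p * ζ| := by
            rw [sub_eq_add_neg]
            exact (abs_add_le _ _).trans_eq (by rw [abs_neg (p * ζ)])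
        _ = l1 ^ (-((N : ℝ) / 2)) * |LamW N (l1⁻¹ • x)| + p * ζ := by
            rw [abs_neg, abs_mul, abs_of_pos hA0, abs_of_pos (mul_pos hp hζpos)]
        _ ≤ l1 ^ (-((N : ℝ) / 2)) * (3 * p * (1 + (‖x‖ / l1) ^ 2 / c) ^ (-p)) + p * ζ := by
            have := mul_le_mul_of_nonneg_left hL hA0.le
            linarith
    · have hx' : ¬ ‖x‖ < R * Real.sqrt (l1 * l2) := hx
      simp only [hfdef, if_neg hx]
      simp only [Dfun]
      rw [if_neg hx']
      simp
  -- the comparison function is integrable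
  have hcont1 : Continuous fun x : EuclideanSpace ℝ (Fin N) =>
      l1 ^ (-((N : ℝ) / 2)) * (3 * p * (1 + (‖x‖ / l1) ^ 2 / c) ^ (-p)) + p * ζ := by
    refine Continuous.add ?_ continuous_const
    refine Continuous.mul continuous_const (Continuous.mul continuous_const ?_)
    refine Continuous.rpow_const (by fun_prop) fun x => Or.inl (by positivity)
  have hind : (fun x : EuclideanSpace ℝ (Fin N) => f ‖x‖) =
      Set.indicator (Metric.ball (0 : EuclideanSpace ℝ (Fin N)) ρ)
        (fun x => l1 ^ (-((N : ℝ) / 2)) * (3 * p * (1 + (‖x‖ / l1) ^ 2 / c) ^ (-p)) + p * ζ) := by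
    funext x
    by_cases hx : ‖x‖ < ρ
    · rw [Set.indicator_of_mem (by simpa [mem_ball_zero_iff] using hx), hfdef]
      simp only [if_pos hx]
    · rw [Set.indicator_of_notMem (by simpa [mem_ball_zero_iff] using hx), hfdef]
      simp only [if_neg hx]
  have hint : Integrable (fun x : EuclideanSpace ℝ (Fin N) => f ‖x‖) := by
    rw [hind]
    exact ((hcont1.continuousOn.integrableOn_compact (isCompact_closedBall _ _)).mono_set
      Metric.ball_subset_closedBall).integrable_indicator measurableSet_ball
  have step1 : (∫ x, |Dfun N R l1 l2 x|) ≤ ∫ x, f ‖x‖ :=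
    integral_mono_of_nonneg (Filter.Eventually.of_forall fun x => abs_nonneg _) hint
      (Filter.Eventually.of_forall hpt)
  have step2 : (∫ x : EuclideanSpace ℝ (Fin N), f ‖x‖) =
      (N : ℝ) * (v * ∫ y in Set.Ioi (0 : ℝ), y ^ (N - 1) • f y) := by
    have h := integral_fun_norm_addHaar (volume : Measure (EuclideanSpace ℝ (Fin N))) f
    rw [finrank_euclideanSpace_fin] at h
    rw [h, nsmul_eq_mul, smul_eq_mul, hvdef]
    rfl
  have hρ2 : ρ ^ 2 = R ^ 2 * (l1 * l2) := by
    rw [hρdef, mul_pow, Real.sq_sqrt (by positivity)]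
  have hρN : ρ ^ N = R ^ ((N : ℝ)) * (l1 * l2) ^ ((N : ℝ) / 2) := by
    rw [hρdef, mul_pow]
    congr 1
    · exact (Real.rpow_natCast R N).symm
    · rw [← Real.rpow_natCast (Real.sqrt (l1 * l2)) N, Real.sqrt_eq_rpow,
        ← Real.rpow_mul (by positivity : (0:ℝ) ≤ l1 * l2)]
      congr 1; ring
  have hradial : (∫ y in Set.Ioi (0 : ℝ), y ^ (N - 1) • f y) ≤
      A'' * (ρ ^ 2 / 2) + p * ζ * (ρ ^ N / (N : ℝ)) := by
    have hcongr : ∀ y ∈ Set.Ioi (0:ℝ), y ^ (N - 1) • f y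
        = Set.indicator (Set.Ioo (0:ℝ) ρ) (fun y => y ^ (N - 1) *
            (l1 ^ (-((N : ℝ) / 2)) * (3 * p * (1 + (y / l1) ^ 2 / c) ^ (-p)) + p * ζ)) y := by
      intro y hy
      by_cases h : y < ρ
      · rw [Set.indicator_of_mem (Set.mem_Ioo.mpr ⟨hy, h⟩), hfdef]
        simp only [if_pos h, smul_eq_mul]
      · rw [Set.indicator_of_notMem (fun hmem => h hmem.2), hfdef]
        simp only [if_neg h, smul_zero]
    rw [MeasureTheory.setIntegral_congr_fun measurableSet_Ioi hcongr,
       MeasureTheory.setIntegral_indicator measurableSet_Ioo,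
       show Set.Ioi (0:ℝ) ∩ Set.Ioo 0 ρ = Set.Ioo 0 ρ from
         Set.inter_eq_self_of_subset_right Set.Ioo_subset_Ioi_self]
    have hcont2 : Continuous fun y : ℝ => (1 + (y / l1) ^ 2 / c) ^ (-p) :=
      Continuous.rpow_const (by fun_prop) fun y => Or.inl (by positivity)
    have hcontL : Continuous fun y : ℝ => y ^ (N - 1) *
        (l1 ^ (-((N : ℝ) / 2)) * (3 * p * (1 + (y / l1) ^ 2 / c) ^ (-p)) + p * ζ) :=
      (continuous_pow (N - 1)).mul
        ((continuous_const.mul (continuous_const.mul hcont2)).add continuous_const)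
    have hcontR : Continuous fun y : ℝ => A'' * y + p * ζ * y ^ (N - 1) :=
      (continuous_const.mul continuous_id).add (continuous_const.mul (continuous_pow _))
    have hmono : (∫ y in Set.Ioo (0:ℝ) ρ, y ^ (N - 1) *
          (l1 ^ (-((N : ℝ) / 2)) * (3 * p * (1 + (y / l1) ^ 2 / c) ^ (-p)) + p * ζ))
        ≤ ∫ y in Set.Ioo (0:ℝ) ρ, (A'' * y + p * ζ * y ^ (N - 1)) := by
      apply MeasureTheory.setIntegral_mono_on
        ((hcontL.integrableOn_Icc (a := 0) (b := ρ)).mono_set Set.Ioo_subset_Icc_self)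
        ((hcontR.integrableOn_Icc (a := 0) (b := ρ)).mono_set Set.Ioo_subset_Icc_self)
        measurableSet_Ioo
      intro y hy
      obtain ⟨hy1, hy2⟩ := hy
      have ht : (0:ℝ) < y / l1 := by positivity
      have k1 : (1 + (y / l1) ^ 2 / c) ^ (-p) ≤ ((y / l1) ^ 2 / c) ^ (-p) := by
        apply Real.rpow_le_rpow_of_nonpos (by positivity) (by linarith) (by linarith)
      have k2 : ((y / l1) ^ 2 / c) ^ (-p) = c ^ p * (y / l1) ^ (-((N:ℝ) - 2)) := by
        rw [Real.div_rpow (by positivity) hc.le, Real.rpow_neg hc.le, div_eq_mul_inv, inv_inv,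
          ← Real.rpow_natCast (y / l1) 2, ← Real.rpow_mul ht.le,
          show ((2:ℕ):ℝ) * (-p) = -((N:ℝ) - 2) by rw [hpdef]; push_cast; ring]
        ring
      have k3 : (y / l1) ^ (-((N:ℝ) - 2)) = y ^ (-((N:ℝ) - 2)) * l1 ^ ((N:ℝ) - 2) := by
        rw [Real.div_rpow hy1.le hl1.le, div_eq_mul_inv, ← Real.rpow_neg hl1.le, neg_neg]
      have k4 : (y:ℝ) ^ (N - 1) * y ^ (-((N:ℝ) - 2)) = y := by
        rw [← Real.rpow_natCast y (N - 1), ← Real.rpow_add hy1,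
          show ((N - 1 : ℕ):ℝ) + -((N:ℝ) - 2) = 1 by
            rw [Nat.cast_sub (by omega)]; push_cast; ring]
        exact Real.rpow_one y
      have k5 : (y:ℝ) ^ (N - 1) * ((1 + (y / l1) ^ 2 / c) ^ (-p))
          ≤ c ^ p * y * l1 ^ ((N:ℝ) - 2) := by
        calc (y:ℝ) ^ (N - 1) * ((1 + (y / l1) ^ 2 / c) ^ (-p))
            ≤ y ^ (N - 1) * (c ^ p * (y ^ (-((N:ℝ) - 2)) * l1 ^ ((N:ℝ) - 2))) := by
              apply mul_le_mul_of_nonneg_left _ (by positivity)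
              rw [← k3, ← k2]; exact k1
          _ = c ^ p * (y ^ (N - 1) * y ^ (-((N:ℝ) - 2))) * l1 ^ ((N:ℝ) - 2) := by ring
          _ = c ^ p * y * l1 ^ ((N:ℝ) - 2) := by rw [k4]
      have hnn : (0:ℝ) ≤ 3 * p * l1 ^ (-((N : ℝ) / 2)) := by positivity
      have k6 := mul_le_mul_of_nonneg_left k5 hnn
      calc y ^ (N - 1) * (l1 ^ (-((N : ℝ) / 2)) * (3 * p * (1 + (y / l1) ^ 2 / c) ^ (-p)) + p * ζ)
          = (3 * p * l1 ^ (-((N : ℝ) / 2))) * (y ^ (N - 1) * ((1 + (y / l1) ^ 2 / c) ^ (-p)))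
            + p * ζ * y ^ (N - 1) := by ring
        _ ≤ (3 * p * l1 ^ (-((N : ℝ) / 2))) * (c ^ p * y * l1 ^ ((N:ℝ) - 2))
            + p * ζ * y ^ (N - 1) := by linarith
        _ = A'' * y + p * ζ * y ^ (N - 1) := by rw [hA''def]; ring
    refine hmono.trans_eq ?_
    rw [← MeasureTheory.integral_Ioc_eq_integral_Ioo, ← intervalIntegral.integral_of_le hρ.le,
      intervalIntegral.integral_add
        (Continuous.intervalIntegrable (u := fun x : ℝ => A'' * x) (by fun_prop) _ _)
        (Continuous.intervalIntegrable (u := fun x : ℝ => p * ζ * x ^ (N - 1)) (by fun_prop) _ _),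
      intervalIntegral.integral_const_mul, intervalIntegral.integral_const_mul,
      integral_id, integral_pow, Nat.sub_add_cancel (by omega : 1 ≤ N),
      show ((N - 1 : ℕ):ℝ) + 1 = (N:ℝ) by rw [Nat.cast_sub (by omega)]; push_cast; ring]
    rw [zero_pow (by omega : N ≠ 0)]
    norm_num
  have hl1key : l1 ^ (-((N : ℝ) / 2)) * l1 ^ ((N : ℝ) - 2) * l1 = l1 ^ p := by
    nth_rewrite 3 [← Real.rpow_one l1]
    rw [← Real.rpow_add hl1, ← Real.rpow_add hl1]
    congr 1
    rw [hpdef]; ring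
  have hsplit : l1 ^ ((N : ℝ) / 2) = l1 ^ p * l1 := by
    nth_rewrite 3 [← Real.rpow_one l1]
    rw [← Real.rpow_add hl1]
    congr 1
    rw [hpdef]; ring
  have hζ2 : ζ ≤ c ^ ((N : ℝ) / 2) * (R ^ ((N : ℝ)))⁻¹ * l2 ^ (-((N : ℝ) / 2)) := by
    have h1 : ζ ≤ (R ^ 2 * l2 / c) ^ (-((N : ℝ) / 2)) := by
      rw [hζdef]
      apply Real.rpow_le_rpow_of_nonpos (by positivity) (by linarith)
      have : (0:ℝ) ≤ (N : ℝ) / 2 := by positivity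
      linarith
    refine h1.trans_eq ?_
    rw [Real.div_rpow (by positivity) hc.le,
        Real.mul_rpow (by positivity) hl2.le,
        Real.rpow_neg hc.le, div_eq_mul_inv, inv_inv,
        ← Real.rpow_natCast R 2, ← Real.rpow_mul hR0.le,
        show ((2:ℕ):ℝ) * (-((N:ℝ)/2)) = -((N:ℝ)) by push_cast; ring,
        Real.rpow_neg hR0.le]
    ring
  have e1 : (N : ℝ) * (v * (A'' * (ρ ^ 2 / 2) + p * ζ * (ρ ^ N / (N : ℝ))))
      = K1 * R ^ 2 * (l1 ^ p * l2) + v * p * (ζ * ρ ^ N) := by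
    have hNne : (N : ℝ) ≠ 0 := by positivity
    rw [hK1def, hA''def, hρ2, ← hl1key]
    field_simp
  have e2 : v * p * (ζ * ρ ^ N) ≤ K2 * (l1 ^ p * l2) := by
    have key : ζ * ρ ^ N ≤ c ^ ((N : ℝ) / 2) * (l1 ^ p * l2) := by
      have hR1 : (R ^ ((N : ℝ)))⁻¹ * R ^ ((N : ℝ)) = 1 :=
        inv_mul_cancel₀ (by positivity)
      calc ζ * ρ ^ N
          ≤ (c ^ ((N : ℝ) / 2) * (R ^ ((N : ℝ)))⁻¹ * l2 ^ (-((N : ℝ) / 2))) *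
            (R ^ ((N : ℝ)) * (l1 * l2) ^ ((N : ℝ) / 2)) := by
            rw [hρN]
            exact mul_le_mul_of_nonneg_right hζ2 (by positivity)
        _ = ((R ^ ((N : ℝ)))⁻¹ * R ^ ((N : ℝ))) *
            (c ^ ((N : ℝ) / 2) * ((l1 * l2) ^ ((N : ℝ) / 2) * l2 ^ (-((N : ℝ) / 2)))) := by ring
        _ = c ^ ((N : ℝ) / 2) * (l1 ^ ((N : ℝ) / 2) * (l2 ^ ((N : ℝ) / 2) * l2 ^ (-((N : ℝ) / 2)))) := by
            rw [hR1, Real.mul_rpow hl1.le hl2.le]; ring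
        _ = c ^ ((N : ℝ) / 2) * l1 ^ ((N : ℝ) / 2) := by
            rw [← Real.rpow_add hl2]; norm_num
        _ = c ^ ((N : ℝ) / 2) * (l1 ^ p * l1) := by rw [hsplit]
        _ ≤ c ^ ((N : ℝ) / 2) * (l1 ^ p * l2) := by
            have h1 : (0:ℝ) < c ^ ((N : ℝ) / 2) := Real.rpow_pos_of_pos hc _
            have h2 : (0:ℝ) < l1 ^ p := Real.rpow_pos_of_pos hl1 _
            exact mul_le_mul_of_nonneg_left
              (mul_le_mul_of_nonneg_left hl12 h2.le) h1.le
    calc v * p * (ζ * ρ ^ N) ≤ v * p * (c ^ ((N : ℝ) / 2) * (l1 ^ p * l2)) := by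
          apply mul_le_mul_of_nonneg_left key (by positivity)
      _ = K2 * (l1 ^ p * l2) := by rw [hK2def]; ring
  have hT : l1 ^ p * l2 = l2 ^ ((N : ℝ) / 2) * (l1 / l2) ^ p := by
    rw [Real.div_rpow hl1.le hl2.le]
    have h1 : l2 ^ ((N : ℝ) / 2) / l2 ^ p = l2 := by
      rw [← Real.rpow_sub hl2]
      rw [show (N : ℝ) / 2 - p = 1 by rw [hpdef]; ring, Real.rpow_one]
    calc l1 ^ p * l2 = l1 ^ p * (l2 ^ ((N : ℝ) / 2) / l2 ^ p) := by rw [h1]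
      _ = l2 ^ ((N : ℝ) / 2) * (l1 ^ p / l2 ^ p) := by ring
  have hfin : (0:ℝ) ≤ l1 ^ p * l2 := by positivity
  have hR2 : (1:ℝ) ≤ R ^ 2 := one_le_pow₀ hR
  calc (∫ x, |Dfun N R l1 l2 x|) ≤ ∫ x, f ‖x‖ := step1
    _ = (N : ℝ) * (v * ∫ y in Set.Ioi (0 : ℝ), y ^ (N - 1) • f y) := step2
    _ ≤ (N : ℝ) * (v * (A'' * (ρ ^ 2 / 2) + p * ζ * (ρ ^ N / (N : ℝ)))) := by
        have hN0 : (0:ℝ) ≤ (N : ℝ) := by positivity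
        exact mul_le_mul_of_nonneg_left (mul_le_mul_of_nonneg_left hradial hv) hN0
    _ = K1 * R ^ 2 * (l1 ^ p * l2) + v * p * (ζ * ρ ^ N) := e1
    _ ≤ K1 * R ^ 2 * (l1 ^ p * l2) + K2 * (l1 ^ p * l2) := by linarith
    _ ≤ (K1 + K2 + 1) * R ^ 2 * (l1 ^ p * l2) := by
        have h3 : K2 * (l1 ^ p * l2) ≤ K2 * R ^ 2 * (l1 ^ p * l2) := by
          apply mul_le_mul_of_nonneg_right _ hfin
          exact le_mul_of_one_le_right hK2 hR2
        have h4 : (0:ℝ) ≤ R ^ 2 * (l1 ^ p * l2) := by positivity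
        nlinarith [h3, h4]
    _ = (K1 + K2 + 1) * R ^ 2 * l2 ^ ((N : ℝ) / 2) * (l1 / l2) ^ p := by
        rw [hT]; ring
end

section
/- Let N ≥ 3. For every c > 0 there exists λ₀ > 0 such that for all 0 < λ < λ₀: (∫_{ℝ^N} |f'(W(x) − W_λ(x)) − f'(W_λ(x)) − f'(W(x))|^{N/2} dx)^{2/N} ≤ c, where f'(u) = ((N+2)/(N−2))|u|^{4/(N−2)}. -/
open MeasureTheory Real

noncomputable def fprime (N : ℕ) (u : ℝ) : ℝ :=
  (((N : ℝ) + 2) / ((N : ℝ) - 2)) * |u| ^ ((4 : ℝ) / ((N : ℝ) - 2))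

/-- The rescaled ground state `W_λ`. -/
noncomputable def Wl (N : ℕ) (lam : ℝ) (x : EuclideanSpace ℝ (Fin N)) : ℝ :=
  lam ^ (-(((N : ℝ) - 2) / 2)) * groundW N (lam⁻¹ • x)

noncomputable def qex (N : ℕ) : ℝ := 2 * (N : ℝ) / ((N : ℝ) - 2)


lemma aux_rpow_add_le {p : ℝ} (hp : 0 ≤ p) (hp1 : p ≤ 1) {u v : ℝ} (hu : 0 ≤ u) (hv : 0 ≤ v) :
    (u + v) ^ p ≤ u ^ p + v ^ p := by
  have h := NNReal.rpow_add_le_add_rpow u.toNNReal v.toNNReal hp hp1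
  rw [← NNReal.coe_le_coe] at h
  push_cast at h
  rwa [Real.coe_toNNReal u hu, Real.coe_toNNReal v hv] at h

lemma key_ineq {p θ : ℝ} (hp : 0 < p) (hθ0 : 0 < θ) (hθp : θ ≤ p) (hθ1 : θ ≤ 1)
    {a b : ℝ} (hb : 0 ≤ b) (hba : b ≤ a) :
    |(|a - b|) ^ p - b ^ p - a ^ p| ≤ (p + 2) * (a ^ (p - θ) * b ^ θ) := by
  have ha : 0 ≤ a := hb.trans hba
  rw [abs_of_nonneg (sub_nonneg.2 hba)]
  rcases eq_or_lt_of_le hb with hb0 | hb0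
  · rw [← hb0]
    rw [sub_zero, Real.zero_rpow hp.ne', Real.zero_rpow hθ0.ne']
    simp
  have ha0 : 0 < a := lt_of_lt_of_le hb0 hba
  have h1 : (a - b) ^ p ≤ a ^ p := Real.rpow_le_rpow (by linarith) (by linarith) hp.le
  have hbθ : b ^ (p - θ) ≤ a ^ (p - θ) := Real.rpow_le_rpow hb hba (by linarith)
  have hbp_split : b ^ p = b ^ (p - θ) * b ^ θ := by
    rw [← Real.rpow_add hb0]; ring_nf
  have hRHS0 : 0 ≤ a ^ (p - θ) * b ^ θ := by positivity
  rcases le_or_gt p 1 with hple | hpgt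
  · -- p ≤ 1
    have h2 : a ^ p ≤ (a - b) ^ p + b ^ p := by
      have := aux_rpow_add_le hp.le hple (sub_nonneg.2 hba) hb
      rwa [sub_add_cancel] at this
    have hb_bound : |(a - b) ^ p - b ^ p - a ^ p| ≤ 2 * b ^ p := by
      have hbpn : 0 ≤ b ^ p := Real.rpow_nonneg hb p
      rw [abs_le]; constructor <;> nlinarith
    refine hb_bound.trans ?_
    rw [hbp_split]
    have : b ^ (p - θ) * b ^ θ ≤ a ^ (p - θ) * b ^ θ := by
      apply mul_le_mul_of_nonneg_right hbθ (Real.rpow_nonneg hb θ)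
    nlinarith [Real.rpow_nonneg hb θ, Real.rpow_nonneg hb (p - θ)]
  · -- 1 < p
    have hfrac : b / a ≤ 1 := (div_le_one ha0).2 hba
    have hbern := one_add_mul_self_le_rpow_one_add (s := -(b / a)) (by linarith) hpgt.le
    -- 1 - p * (b/a) ≤ (1 - b/a)^p
    have h1sub : (0:ℝ) ≤ 1 - b / a := by linarith
    have key : a ^ p * (1 - p * (b / a)) ≤ (a - b) ^ p := by
      have h2 := mul_le_mul_of_nonneg_left hbern (Real.rpow_nonneg ha p)
      rw [← Real.mul_rpow ha (by linarith : (0:ℝ) ≤ 1 + -(b/a))] at h2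
      have : a * (1 + -(b / a)) = a - b := by field_simp; ring
      rw [this] at h2
      calc a ^ p * (1 - p * (b / a)) = a ^ p * (1 + p * -(b / a)) := by ring
        _ ≤ (a - b) ^ p := h2
    have hap_div : a ^ p * (b / a) = a ^ (p - 1) * b := by
      rw [Real.rpow_sub ha0, Real.rpow_one]; field_simp
    have h2 : a ^ p - p * (a ^ (p - 1) * b) ≤ (a - b) ^ p := by
      calc a ^ p - p * (a ^ (p - 1) * b) = a ^ p * (1 - p * (b / a)) := by
            rw [← hap_div]; ring
        _ ≤ (a - b) ^ p := key
    have h3 : b ^ p ≤ a ^ (p - 1) * b := by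
      have hsplit : b ^ p = b ^ (p - 1) * b := by
        rw [← Real.rpow_add_one hb0.ne' (p - 1)]; ring_nf
      rw [hsplit]
      exact mul_le_mul_of_nonneg_right (Real.rpow_le_rpow hb hba (by linarith)) hb
    have h4 : a ^ (p - 1) * b ≤ a ^ (p - θ) * b ^ θ := by
      have hbsplit : b = b ^ (1 - θ) * b ^ θ := by
        rw [← Real.rpow_add hb0]; ring_nf; rw [Real.rpow_one]
      have hb1θ : b ^ (1 - θ) ≤ a ^ (1 - θ) := Real.rpow_le_rpow hb hba (by linarith)
      have hasplit : a ^ (p - 1) * a ^ (1 - θ) = a ^ (p - θ) := by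
        rw [← Real.rpow_add ha0]; ring_nf
      calc a ^ (p - 1) * b = a ^ (p - 1) * (b ^ (1 - θ) * b ^ θ) := by rw [← hbsplit]
        _ ≤ a ^ (p - 1) * (a ^ (1 - θ) * b ^ θ) := by
            apply mul_le_mul_of_nonneg_left _ (Real.rpow_nonneg ha _)
            exact mul_le_mul_of_nonneg_right hb1θ (Real.rpow_nonneg hb θ)
        _ = a ^ (p - θ) * b ^ θ := by rw [← mul_assoc, hasplit]
    have hbpn : 0 ≤ b ^ p := Real.rpow_nonneg hb p
    have habn : 0 ≤ a ^ (p-1) * b := by positivity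
    rw [abs_le]; constructor <;> nlinarith

lemma key_ineq_minmax {p θ : ℝ} (hp : 0 < p) (hθ0 : 0 < θ) (hθp : θ ≤ p) (hθ1 : θ ≤ 1)
    {a b : ℝ} (ha : 0 ≤ a) (hb : 0 ≤ b) :
    |(|a - b|) ^ p - b ^ p - a ^ p| ≤ (p + 2) * (max a b ^ (p - θ) * min a b ^ θ) := by
  rcases le_total b a with h | h
  · rw [max_eq_left h, min_eq_right h]; exact key_ineq hp hθ0 hθp hθ1 hb h
  · rw [max_eq_right h, min_eq_left h]
    have h2 := key_ineq hp hθ0 hθp hθ1 ha h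
    rw [abs_sub_comm a b] at *
    calc |(|b - a|) ^ p - b ^ p - a ^ p| = |(|b - a|) ^ p - a ^ p - b ^ p| := by
          rw [show (|b - a|) ^ p - b ^ p - a ^ p = (|b - a|) ^ p - a ^ p - b ^ p by ring]
      _ ≤ _ := h2

section Aux

variable {N : ℕ}

lemma hcast (hN : 3 ≤ N) : (3 : ℝ) ≤ (N : ℝ) := by exact_mod_cast hN

lemma hc0_pos (hN : 3 ≤ N) : (0 : ℝ) < (N : ℝ) * ((N : ℝ) - 2) := by
  have := hcast hN; nlinarith

lemma base_pos (hN : 3 ≤ N) (x : EuclideanSpace ℝ (Fin N)) :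
    (0 : ℝ) < 1 + ‖x‖ ^ 2 / ((N : ℝ) * ((N : ℝ) - 2)) := by
  have := hc0_pos hN; positivity

lemma groundW_pos (hN : 3 ≤ N) (x : EuclideanSpace ℝ (Fin N)) : 0 < groundW N x :=
  Real.rpow_pos_of_pos (base_pos hN x) _

lemma groundW_continuous (hN : 3 ≤ N) : Continuous (groundW N) := by
  unfold groundW
  apply Continuous.rpow_const
  · fun_prop
  · intro x; exact Or.inl (ne_of_gt (base_pos hN x))

lemma Wl_pos (hN : 3 ≤ N) {lam : ℝ} (hlam : 0 < lam) (x : EuclideanSpace ℝ (Fin N)) :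
    0 < Wl N lam x :=
  mul_pos (Real.rpow_pos_of_pos hlam _) (groundW_pos hN _)

lemma Wl_continuous (hN : 3 ≤ N) (lam : ℝ) : Continuous (Wl N lam) := by
  unfold Wl
  exact continuous_const.mul ((groundW_continuous hN).comp (continuous_const_smul _))

lemma qex_pos (hN : 3 ≤ N) : 0 < qex N := by
  have := hcast hN; unfold qex
  apply div_pos <;> linarith

lemma sq_qex (hN : 3 ≤ N) : ((N : ℝ) - 2) / 2 * qex N = (N : ℝ) := by
  have := hcast hN
  have h2 : (N : ℝ) - 2 ≠ 0 := by linarith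
  unfold qex; field_simp

lemma groundW_q (hN : 3 ≤ N) (x : EuclideanSpace ℝ (Fin N)) :
    groundW N x ^ qex N = (1 + ‖x‖ ^ 2 / ((N : ℝ) * ((N : ℝ) - 2))) ^ (-(N : ℝ)) := by
  unfold groundW
  rw [← Real.rpow_mul (base_pos hN x).le]
  congr 1
  rw [neg_mul, sq_qex hN]

lemma integrable_decay (hN : 3 ≤ N) {c : ℝ} (hc : 0 < c) :
    Integrable (fun x : EuclideanSpace ℝ (Fin N) => (1 + ‖x‖ ^ 2 / c) ^ (-(N : ℝ))) := by
  have hN3 := hcast hN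
  have hdim : (Module.finrank ℝ (EuclideanSpace ℝ (Fin N)) : ℝ) < 2 * (N : ℝ) := by
    rw [finrank_euclideanSpace_fin]; linarith
  set M : ℝ := max 1 c with hM
  have hM1 : (1 : ℝ) ≤ M := le_max_left _ _
  have hMc : c ≤ M := le_max_right _ _
  have hM0 : (0 : ℝ) < M := lt_of_lt_of_le one_pos hM1
  refine ((integrable_rpow_neg_one_add_norm_sq (μ := volume)
      (E := EuclideanSpace ℝ (Fin N)) (r := 2 * (N : ℝ)) hdim).const_mul
      (M ^ (N : ℝ))).mono' ?_ ?_
  · apply Continuous.aestronglyMeasurable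
    apply Continuous.rpow_const
    · fun_prop
    · intro x; left; positivity
  · filter_upwards with x
    have hb1 : (0 : ℝ) < 1 + ‖x‖ ^ 2 / c := by positivity
    have hb2 : (0 : ℝ) < 1 + ‖x‖ ^ 2 := by positivity
    rw [Real.norm_of_nonneg (Real.rpow_nonneg hb1.le _)]
    have hle : (1 + ‖x‖ ^ 2) / M ≤ 1 + ‖x‖ ^ 2 / c := by
      rw [div_le_iff₀ hM0]
      have h1 : ‖x‖ ^ 2 / c * M ≥ ‖x‖ ^ 2 := by
        rw [ge_iff_le, div_mul_eq_mul_div, le_div_iff₀ hc]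
        nlinarith [sq_nonneg ‖x‖]
      nlinarith
    have h2 : (1 + ‖x‖ ^ 2 / c) ^ (-(N : ℝ)) ≤ ((1 + ‖x‖ ^ 2) / M) ^ (-(N : ℝ)) :=
      Real.rpow_le_rpow_of_nonpos (by positivity) hle (by linarith)
    refine h2.trans (le_of_eq ?_)
    rw [Real.div_rpow hb2.le hM0.le, Real.rpow_neg hb2.le, Real.rpow_neg hM0.le,
      show -(2 * (N:ℝ)) / 2 = -(N:ℝ) by ring, Real.rpow_neg hb2.le]
    rw [div_eq_mul_inv, inv_inv]
    ring

lemma integrable_groundW_q (hN : 3 ≤ N) :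
    Integrable (fun x : EuclideanSpace ℝ (Fin N) => groundW N x ^ qex N) := by
  have h := integrable_decay hN (hc0_pos hN)
  refine h.congr ?_
  filter_upwards with x
  rw [groundW_q hN]

lemma Wl_q (hN : 3 ≤ N) {lam : ℝ} (hlam : 0 < lam) (x : EuclideanSpace ℝ (Fin N)) :
    Wl N lam x ^ qex N = lam ^ (-(N : ℝ)) * groundW N (lam⁻¹ • x) ^ qex N := by
  unfold Wl
  rw [Real.mul_rpow (Real.rpow_nonneg hlam.le _) (groundW_pos hN _).le,
    ← Real.rpow_mul hlam.le]
  congr 2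
  rw [neg_mul, sq_qex hN]

lemma integrable_Wl_q (hN : 3 ≤ N) {lam : ℝ} (hlam : 0 < lam) :
    Integrable (fun x : EuclideanSpace ℝ (Fin N) => Wl N lam x ^ qex N) := by
  have h1 : Integrable (fun x : EuclideanSpace ℝ (Fin N) =>
      groundW N (lam⁻¹ • x) ^ qex N) :=
    (integrable_groundW_q hN).comp_smul (inv_ne_zero hlam.ne')
  refine (h1.const_mul (lam ^ (-(N : ℝ)))).congr ?_
  filter_upwards with x
  rw [Wl_q hN hlam]

lemma integral_Wl_q (hN : 3 ≤ N) {lam : ℝ} (hlam : 0 < lam) :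
    ∫ x : EuclideanSpace ℝ (Fin N), Wl N lam x ^ qex N
      = ∫ x : EuclideanSpace ℝ (Fin N), groundW N x ^ qex N := by
  have h1 : (∫ x : EuclideanSpace ℝ (Fin N), Wl N lam x ^ qex N)
      = ∫ x : EuclideanSpace ℝ (Fin N), lam ^ (-(N : ℝ)) * groundW N (lam⁻¹ • x) ^ qex N := by
    congr 1; funext x; rw [Wl_q hN hlam]
  rw [h1, integral_const_mul,
    Measure.integral_comp_inv_smul_of_nonneg volume
      (fun y : EuclideanSpace ℝ (Fin N) => groundW N y ^ qex N) hlam.le,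
    finrank_euclideanSpace_fin, smul_eq_mul, ← mul_assoc, ← Real.rpow_natCast lam N,
    ← Real.rpow_add hlam]
  norm_num

lemma Wl_q_le (hN : 3 ≤ N) {lam : ℝ} (hlam : 0 < lam) {x : EuclideanSpace ℝ (Fin N)}
    (hx : x ≠ 0) :
    Wl N lam x ^ qex N
      ≤ ((N : ℝ) * ((N : ℝ) - 2)) ^ (N : ℝ) * ‖x‖ ^ (-(2 * (N : ℝ))) * lam ^ (N : ℝ) := by
  have hN3 := hcast hN
  have hc0 := hc0_pos hN
  have hxn : (0 : ℝ) < ‖x‖ := norm_pos_iff.2 hx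
  set c₀ : ℝ := (N : ℝ) * ((N : ℝ) - 2) with hc₀
  rw [Wl_q hN hlam, groundW_q hN]
  have hy : ‖lam⁻¹ • x‖ ^ 2 = lam⁻¹ ^ 2 * ‖x‖ ^ 2 := by
    rw [norm_smul, Real.norm_eq_abs, abs_of_pos (inv_pos.2 hlam)]; ring
  have hkey : (1 + ‖lam⁻¹ • x‖ ^ 2 / c₀) ^ (-(N : ℝ))
      ≤ (lam⁻¹ ^ 2 * ‖x‖ ^ 2 / c₀) ^ (-(N : ℝ)) := by
    apply Real.rpow_le_rpow_of_nonpos (by positivity) (by rw [hy]; linarith) (by linarith)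
  have e1 : ((lam⁻¹ : ℝ) ^ 2) ^ (-(N : ℝ)) = lam ^ (2 * (N : ℝ)) := by
    rw [← Real.rpow_natCast lam⁻¹ 2, Real.inv_rpow hlam.le, ← Real.rpow_neg hlam.le,
      ← Real.rpow_mul hlam.le]
    norm_num
  have e2 : (‖x‖ ^ 2) ^ (-(N : ℝ)) = ‖x‖ ^ (-(2 * (N : ℝ))) := by
    rw [← Real.rpow_natCast ‖x‖ 2, ← Real.rpow_mul (norm_nonneg x),
      show ((2:ℕ):ℝ) * (-(N:ℝ)) = -(2 * (N:ℝ)) from by push_cast; ring]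
  have e3 : ((c₀⁻¹ : ℝ)) ^ (-(N : ℝ)) = c₀ ^ (N : ℝ) := by
    rw [Real.inv_rpow hc0.le, ← Real.rpow_neg hc0.le]
    norm_num
  have heq : (lam⁻¹ ^ 2 * ‖x‖ ^ 2 / c₀) ^ (-(N : ℝ))
      = c₀ ^ (N : ℝ) * ‖x‖ ^ (-(2 * (N : ℝ))) * lam ^ (2 * (N : ℝ)) := by
    rw [div_eq_mul_inv, Real.mul_rpow (by positivity) (by positivity),
      Real.mul_rpow (by positivity) (by positivity), e1, e2, e3]
    ring
  calc lam ^ (-(N : ℝ)) * (1 + ‖lam⁻¹ • x‖ ^ 2 / c₀) ^ (-(N : ℝ))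
      ≤ lam ^ (-(N : ℝ)) * (c₀ ^ (N : ℝ) * ‖x‖ ^ (-(2 * (N : ℝ))) * lam ^ (2 * (N : ℝ))) := by
        apply mul_le_mul_of_nonneg_left _ (Real.rpow_nonneg hlam.le _)
        exact heq ▸ hkey
    _ = c₀ ^ (N : ℝ) * ‖x‖ ^ (-(2 * (N : ℝ))) * lam ^ (N : ℝ) := by
        rw [show lam ^ (-(N : ℝ)) * (c₀ ^ (N : ℝ) * ‖x‖ ^ (-(2 * (N : ℝ))) * lam ^ (2 * (N : ℝ)))
            = c₀ ^ (N : ℝ) * ‖x‖ ^ (-(2 * (N : ℝ))) * (lam ^ (-(N : ℝ)) * lam ^ (2 * (N : ℝ)))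
            from by ring, ← Real.rpow_add hlam,
          show -(N : ℝ) + 2 * (N : ℝ) = (N : ℝ) from by ring]

lemma meas_min_q (hN : 3 ≤ N) (lam : ℝ) :
    AEStronglyMeasurable
      (fun x : EuclideanSpace ℝ (Fin N) => min (groundW N x) (Wl N lam x) ^ qex N) volume := by
  apply Continuous.aestronglyMeasurable
  apply Continuous.rpow_const ((groundW_continuous hN).min (Wl_continuous hN lam))
  intro x; right; exact (qex_pos hN).le

lemma tendsto_min_int (hN : 3 ≤ N) :
    Filter.Tendsto (fun lam : ℝ =>
      ∫ x : EuclideanSpace ℝ (Fin N), min (groundW N x) (Wl N lam x) ^ qex N)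
      (nhdsWithin 0 (Set.Ioi 0)) (nhds 0) := by
  have hq0 := qex_pos hN
  have H : Filter.Tendsto (fun lam : ℝ =>
      ∫ x : EuclideanSpace ℝ (Fin N), min (groundW N x) (Wl N lam x) ^ qex N)
      (nhdsWithin 0 (Set.Ioi 0)) (nhds (∫ _ : EuclideanSpace ℝ (Fin N), (0:ℝ))) := by
    apply tendsto_integral_filter_of_dominated_convergence
      (fun x : EuclideanSpace ℝ (Fin N) => groundW N x ^ qex N)
    · exact Filter.Eventually.of_forall fun lam => meas_min_q hN lam
    · filter_upwards [self_mem_nhdsWithin] with lam hlam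
      have hlam' : (0:ℝ) < lam := hlam
      filter_upwards with x
      have h1 : 0 < min (groundW N x) (Wl N lam x) :=
        lt_min (groundW_pos hN x) (Wl_pos hN hlam' x)
      rw [Real.norm_of_nonneg (Real.rpow_nonneg h1.le _)]
      exact Real.rpow_le_rpow h1.le (min_le_left _ _) hq0.le
    · exact integrable_groundW_q hN
    · have hne : ∀ᵐ x : EuclideanSpace ℝ (Fin N), x ≠ 0 := by
        haveI : Nontrivial (EuclideanSpace ℝ (Fin N)) := by
          refine ⟨⟨EuclideanSpace.single ⟨0, by omega⟩ 1, 0, ?_⟩⟩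
          intro h
          have := congrArg (‖·‖) h
          simp [EuclideanSpace.norm_single] at this
        exact ae_iff.2 (by simp)
      filter_upwards [hne] with x hx
      have hxn : (0 : ℝ) < ‖x‖ := norm_pos_iff.2 hx
      have hc0 := hc0_pos hN
      apply squeeze_zero'
      · filter_upwards [self_mem_nhdsWithin] with lam hlam
        have hlam' : (0:ℝ) < lam := hlam
        exact Real.rpow_nonneg (le_min (groundW_pos hN x).le (Wl_pos hN hlam' x).le) _
      · filter_upwards [self_mem_nhdsWithin] with lam hlam
        have hlam' : (0:ℝ) < lam := hlam
        calc min (groundW N x) (Wl N lam x) ^ qex N ≤ Wl N lam x ^ qex N := by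
              apply Real.rpow_le_rpow (le_min (groundW_pos hN x).le (Wl_pos hN hlam' x).le)
                (min_le_right _ _) hq0.le
          _ ≤ ((N : ℝ) * ((N : ℝ) - 2)) ^ (N : ℝ) * ‖x‖ ^ (-(2 * (N : ℝ))) * lam ^ (N : ℝ) :=
              Wl_q_le hN hlam' hx
      · have hpow : Filter.Tendsto (fun lam : ℝ => lam ^ (N : ℝ))
            (nhdsWithin 0 (Set.Ioi 0)) (nhds 0) := by
          have h1 : Filter.Tendsto (fun lam : ℝ => lam ^ (N : ℕ)) (nhds 0) (nhds 0) := by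
            have := (continuous_pow N).tendsto (0 : ℝ)
            rwa [zero_pow (by omega : N ≠ 0)] at this
          have h2 : Filter.Tendsto (fun lam : ℝ => lam ^ (N : ℕ))
              (nhdsWithin 0 (Set.Ioi 0)) (nhds 0) := h1.mono_left nhdsWithin_le_nhds
          refine h2.congr fun lam => ?_
          rw [Real.rpow_natCast]
        have := hpow.const_mul (((N : ℝ) * ((N : ℝ) - 2)) ^ (N : ℝ) * ‖x‖ ^ (-(2 * (N : ℝ))))
        rw [mul_zero] at this
        refine this.congr fun lam => by ring
  simpa using H

lemma memLp_of_int {X : Type*} [MeasurableSpace X] {μ : Measure X} {g : X → ℝ}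
    (hg0 : ∀ x, 0 ≤ g x) (hgm : AEStronglyMeasurable g μ) {r : ℝ} (hr : 1 < r)
    (hint : Integrable (fun x => g x ^ r) μ) : MemLp g (ENNReal.ofReal r) μ := by
  have hr0 : (0 : ℝ) < r := by linarith
  have hne0 : ENNReal.ofReal r ≠ 0 := by
    simp only [ne_eq, ENNReal.ofReal_eq_zero, not_le]; linarith
  have hnetop : ENNReal.ofReal r ≠ ⊤ := ENNReal.ofReal_ne_top
  rw [← memLp_norm_rpow_iff hgm hne0 hnetop, ENNReal.div_self hne0 hnetop,
    memLp_one_iff_integrable]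
  refine hint.congr ?_
  filter_upwards with x
  rw [ENNReal.toReal_ofReal hr0.le, Real.norm_of_nonneg (hg0 x)]

end Aux

theorem fprime_interaction_small (N : ℕ) (hN : 3 ≤ N) :
    ∀ c > (0 : ℝ), ∃ lam₀ > (0 : ℝ), ∀ lam : ℝ, 0 < lam → lam < lam₀ →
      (∫ x, |fprime N (groundW N x - Wl N lam x) - fprime N (Wl N lam x) -
          fprime N (groundW N x)| ^ ((N : ℝ) / 2)) ^ ((2 : ℝ) / N) ≤ c := by
  intro c hc
  have hN3 := hcast hN
  have h2 : (0 : ℝ) < (N : ℝ) - 2 := by linarith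
  have hNpos : (0 : ℝ) < (N : ℝ) := by linarith
  have hq0 : 0 < qex N := qex_pos hN
  set p : ℝ := 4 / ((N : ℝ) - 2) with hp_def
  have hp : 0 < p := by rw [hp_def]; positivity
  set κ : ℝ := ((N : ℝ) + 2) / ((N : ℝ) - 2) with hκ_def
  have hκ : 0 < κ := by rw [hκ_def]; apply div_pos <;> linarith
  set θ : ℝ := min p 1 / 2 with hθ_def
  have hθ0 : 0 < θ := div_pos (lt_min hp one_pos) two_pos
  have hθ1 : θ ≤ 1 := by
    have := min_le_right p 1
    rw [hθ_def]; linarith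
  have hθp : θ < p := by
    have := min_le_left p 1
    rw [hθ_def]; linarith
  set α : ℝ := (p - θ) * ((N : ℝ) / 2) with hα_def
  set β : ℝ := θ * ((N : ℝ) / 2) with hβ_def
  have hα : 0 < α := by rw [hα_def]; apply mul_pos (by linarith) (by positivity)
  have hβ : 0 < β := by rw [hβ_def]; apply mul_pos hθ0 (by positivity)
  have hαβ : α + β = qex N := by
    rw [hα_def, hβ_def, hp_def]; unfold qex; field_simp; ring
  have hαq : α < qex N := by linarith
  have hpq : (qex N / α).HolderConjugate (qex N / β) := by
    rw [Real.holderConjugate_iff]; constructor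
    · rw [lt_div_iff₀ hα]; linarith
    · rw [inv_div, inv_div, ← add_div, hαβ, div_self hq0.ne']
  set I : ℝ := ∫ x : EuclideanSpace ℝ (Fin N), groundW N x ^ qex N with hI_def
  have hI0 : 0 ≤ I := by
    rw [hI_def]
    exact integral_nonneg fun x => Real.rpow_nonneg (groundW_pos hN x).le _
  set K₁ : ℝ := (κ * (p + 2)) ^ ((N : ℝ) / 2) with hK₁_def
  have hK₁0 : 0 ≤ K₁ := by rw [hK₁_def]; positivity
  set K₀ : ℝ := K₁ * (2 * I) ^ (α / qex N) with hK₀_def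
  have hK₀0 : 0 ≤ K₀ := by rw [hK₀_def]; positivity
  -- the main estimate for each fixed 0 < lam
  have key : ∀ lam : ℝ, 0 < lam →
      (∫ x, |fprime N (groundW N x - Wl N lam x) - fprime N (Wl N lam x) -
          fprime N (groundW N x)| ^ ((N : ℝ) / 2))
        ≤ K₀ * (∫ x : EuclideanSpace ℝ (Fin N),
            min (groundW N x) (Wl N lam x) ^ qex N) ^ (β / qex N) := by
    intro lam hlam
    have ha : ∀ x, 0 < groundW N x := groundW_pos hN
    have hb : ∀ x : EuclideanSpace ℝ (Fin N), 0 < Wl N lam x := Wl_pos hN hlam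
    have hM0 : ∀ x, 0 < max (groundW N x) (Wl N lam x) := fun x => lt_max_of_lt_left (ha x)
    have hm0 : ∀ x, 0 < min (groundW N x) (Wl N lam x) := fun x => lt_min (ha x) (hb x)
    have hMcont : Continuous fun x : EuclideanSpace ℝ (Fin N) =>
        max (groundW N x) (Wl N lam x) := (groundW_continuous hN).max (Wl_continuous hN lam)
    have hmcont : Continuous fun x : EuclideanSpace ℝ (Fin N) =>
        min (groundW N x) (Wl N lam x) := (groundW_continuous hN).min (Wl_continuous hN lam)
    have hWq := integrable_groundW_q hN
    have hWlq := integrable_Wl_q (N := N) hN hlam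
    have hpt : ∀ x, |fprime N (groundW N x - Wl N lam x) - fprime N (Wl N lam x) -
        fprime N (groundW N x)| ^ ((N : ℝ) / 2)
        ≤ K₁ * (max (groundW N x) (Wl N lam x) ^ α * min (groundW N x) (Wl N lam x) ^ β) := by
      intro x
      have hE : fprime N (groundW N x - Wl N lam x) - fprime N (Wl N lam x) -
          fprime N (groundW N x)
          = κ * ((|groundW N x - Wl N lam x|) ^ p - Wl N lam x ^ p - groundW N x ^ p) := by
        rw [hκ_def, hp_def]
        unfold fprime
        rw [abs_of_pos (hb x), abs_of_pos (ha x)]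
        ring
      rw [hE, abs_mul, abs_of_pos hκ]
      have hkm := key_ineq_minmax hp hθ0 hθp.le hθ1 (ha x).le (hb x).le
      have hstep : κ * |(|groundW N x - Wl N lam x|) ^ p - Wl N lam x ^ p - groundW N x ^ p|
          ≤ κ * ((p + 2) * (max (groundW N x) (Wl N lam x) ^ (p - θ)
              * min (groundW N x) (Wl N lam x) ^ θ)) :=
        mul_le_mul_of_nonneg_left hkm hκ.le
      have h1 := Real.rpow_le_rpow (mul_nonneg hκ.le (abs_nonneg _)) hstep
        (by positivity : (0:ℝ) ≤ (N:ℝ)/2)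
      refine h1.trans (le_of_eq ?_)
      rw [show κ * ((p + 2) * (max (groundW N x) (Wl N lam x) ^ (p - θ)
            * min (groundW N x) (Wl N lam x) ^ θ))
          = κ * (p + 2) * (max (groundW N x) (Wl N lam x) ^ (p - θ)
            * min (groundW N x) (Wl N lam x) ^ θ) from by ring,
        Real.mul_rpow (mul_nonneg hκ.le (by linarith : (0:ℝ) ≤ p + 2))
          (mul_nonneg (Real.rpow_nonneg (hM0 x).le _) (Real.rpow_nonneg (hm0 x).le _)),
        Real.mul_rpow (Real.rpow_nonneg (hM0 x).le _) (Real.rpow_nonneg (hm0 x).le _),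
        ← Real.rpow_mul (hM0 x).le, ← Real.rpow_mul (hm0 x).le,
        ← hα_def, ← hβ_def, ← hK₁_def]
    have hMq : Integrable (fun x : EuclideanSpace ℝ (Fin N) =>
        max (groundW N x) (Wl N lam x) ^ qex N) := by
      refine (hWq.add hWlq).mono' (Continuous.aestronglyMeasurable
        (hMcont.rpow_const fun x => Or.inr hq0.le)) ?_
      filter_upwards with x
      rw [Real.norm_of_nonneg (Real.rpow_nonneg (hM0 x).le _)]
      rcases le_total (Wl N lam x) (groundW N x) with h | h
      · rw [max_eq_left h]
        exact le_add_of_nonneg_right (Real.rpow_nonneg (hb x).le _)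
      · rw [max_eq_right h]
        exact le_add_of_nonneg_left (Real.rpow_nonneg (ha x).le _)
    have hmq : Integrable (fun x : EuclideanSpace ℝ (Fin N) =>
        min (groundW N x) (Wl N lam x) ^ qex N) := by
      refine hWq.mono' (Continuous.aestronglyMeasurable
        (hmcont.rpow_const fun x => Or.inr hq0.le)) ?_
      filter_upwards with x
      rw [Real.norm_of_nonneg (Real.rpow_nonneg (hm0 x).le _)]
      exact Real.rpow_le_rpow (hm0 x).le (min_le_left _ _) hq0.le
    have eM : ∀ x : EuclideanSpace ℝ (Fin N),
        (max (groundW N x) (Wl N lam x) ^ α) ^ (qex N / α)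
          = max (groundW N x) (Wl N lam x) ^ qex N := by
      intro x
      rw [← Real.rpow_mul (hM0 x).le]
      congr 1
      field_simp
    have em : ∀ x : EuclideanSpace ℝ (Fin N),
        (min (groundW N x) (Wl N lam x) ^ β) ^ (qex N / β)
          = min (groundW N x) (Wl N lam x) ^ qex N := by
      intro x
      rw [← Real.rpow_mul (hm0 x).le]
      congr 1
      field_simp
    have hMm : Integrable (fun x : EuclideanSpace ℝ (Fin N) =>
        max (groundW N x) (Wl N lam x) ^ α * min (groundW N x) (Wl N lam x) ^ β) := by
      refine (hMq.add hmq).mono' (Continuous.aestronglyMeasurable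
        ((hMcont.rpow_const fun x => Or.inr hα.le).mul
          (hmcont.rpow_const fun x => Or.inr hβ.le))) ?_
      filter_upwards with x
      rw [Real.norm_of_nonneg (mul_nonneg (Real.rpow_nonneg (hM0 x).le _)
        (Real.rpow_nonneg (hm0 x).le _))]
      have hy := Real.young_inequality_of_nonneg (Real.rpow_nonneg (hM0 x).le α)
        (Real.rpow_nonneg (hm0 x).le β) hpq
      rw [eM x, em x] at hy
      refine hy.trans ?_
      have d1 := div_le_self (Real.rpow_nonneg (hM0 x).le (qex N)) hpq.lt.le
      have d2 := div_le_self (Real.rpow_nonneg (hm0 x).le (qex N)) hpq.symm.lt.le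
      exact add_le_add d1 d2
    have mem1 : MemLp (fun x : EuclideanSpace ℝ (Fin N) =>
        max (groundW N x) (Wl N lam x) ^ α) (ENNReal.ofReal (qex N / α)) volume := by
      refine memLp_of_int (fun x => Real.rpow_nonneg (hM0 x).le _)
        (Continuous.aestronglyMeasurable (hMcont.rpow_const fun x => Or.inr hα.le))
        hpq.lt ?_
      refine hMq.congr ?_
      filter_upwards with x
      exact (eM x).symm
    have mem2 : MemLp (fun x : EuclideanSpace ℝ (Fin N) =>
        min (groundW N x) (Wl N lam x) ^ β) (ENNReal.ofReal (qex N / β)) volume := by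
      refine memLp_of_int (fun x => Real.rpow_nonneg (hm0 x).le _)
        (Continuous.aestronglyMeasurable (hmcont.rpow_const fun x => Or.inr hβ.le))
        hpq.symm.lt ?_
      refine hmq.congr ?_
      filter_upwards with x
      exact (em x).symm
    have hH := integral_mul_le_Lp_mul_Lq_of_nonneg hpq
      (Filter.Eventually.of_forall fun x => Real.rpow_nonneg (hM0 x).le α)
      (Filter.Eventually.of_forall fun x => Real.rpow_nonneg (hm0 x).le β) mem1 mem2
    simp only [eM, em] at hH
    rw [one_div_div, one_div_div] at hH
    have hint2 : (∫ x : EuclideanSpace ℝ (Fin N),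
        max (groundW N x) (Wl N lam x) ^ qex N) ≤ 2 * I := by
      have hptw : ∀ x : EuclideanSpace ℝ (Fin N),
          max (groundW N x) (Wl N lam x) ^ qex N
            ≤ groundW N x ^ qex N + Wl N lam x ^ qex N := by
        intro x
        rcases le_total (Wl N lam x) (groundW N x) with h | h
        · rw [max_eq_left h]
          exact le_add_of_nonneg_right (Real.rpow_nonneg (hb x).le _)
        · rw [max_eq_right h]
          exact le_add_of_nonneg_left (Real.rpow_nonneg (ha x).le _)
      have hmono := integral_mono_of_nonneg
        (Filter.Eventually.of_forall fun x => Real.rpow_nonneg (hM0 x).le (qex N))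
        (hWq.add hWlq) (Filter.Eventually.of_forall hptw)
      simp only [Pi.add_apply] at hmono
      rw [integral_add hWq hWlq, integral_Wl_q hN hlam] at hmono
      rw [hI_def]
      linarith
    have hfinal := integral_mono_of_nonneg
      (Filter.Eventually.of_forall fun x => Real.rpow_nonneg (abs_nonneg _) _)
      (hMm.const_mul K₁) (Filter.Eventually.of_forall hpt)
    rw [integral_const_mul] at hfinal
    refine hfinal.trans ?_
    rw [hK₀_def, mul_assoc]
    apply mul_le_mul_of_nonneg_left _ hK₁0
    refine hH.trans ?_
    apply mul_le_mul_of_nonneg_right _ (Real.rpow_nonneg (integral_nonneg fun x =>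
      Real.rpow_nonneg (hm0 x).le _) _)
    exact Real.rpow_le_rpow (integral_nonneg fun x => Real.rpow_nonneg (hM0 x).le _)
      hint2 (by positivity)
  -- conclude by the tendsto lemma
  have hK₀1 : (0 : ℝ) < K₀ + 1 := by linarith
  have hcpow : (0 : ℝ) < c ^ ((N : ℝ) / 2) := Real.rpow_pos_of_pos hc _
  set ε : ℝ := (c ^ ((N : ℝ) / 2) / (K₀ + 1)) ^ (qex N / β) with hε_def
  have hε : 0 < ε := by rw [hε_def]; positivity
  have hev : ∀ᶠ lam in nhdsWithin (0 : ℝ) (Set.Ioi 0),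
      (∫ x : EuclideanSpace ℝ (Fin N), min (groundW N x) (Wl N lam x) ^ qex N) < ε :=
    (tendsto_min_int hN).eventually_lt_const hε
  obtain ⟨lam₀, hlam₀, hsub⟩ := mem_nhdsGT_iff_exists_Ioo_subset.1 hev
  refine ⟨lam₀, hlam₀, fun lam hl1 hl2 => ?_⟩
  have hsmall : (∫ x : EuclideanSpace ℝ (Fin N),
      min (groundW N x) (Wl N lam x) ^ qex N) < ε := hsub ⟨hl1, hl2⟩
  have hIm0 : 0 ≤ ∫ x : EuclideanSpace ℝ (Fin N), min (groundW N x) (Wl N lam x) ^ qex N :=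
    integral_nonneg fun x =>
      Real.rpow_nonneg (le_min (groundW_pos hN x).le (Wl_pos hN hl1 x).le) _
  have h2' : (∫ x : EuclideanSpace ℝ (Fin N), min (groundW N x) (Wl N lam x) ^ qex N)
      ^ (β / qex N) ≤ ε ^ (β / qex N) :=
    Real.rpow_le_rpow hIm0 hsmall.le (by positivity)
  have h3 : ε ^ (β / qex N) = c ^ ((N : ℝ) / 2) / (K₀ + 1) := by
    rw [hε_def, ← Real.rpow_mul (by positivity),
      show qex N / β * (β / qex N) = 1 from by field_simp, Real.rpow_one]
  have h4 : (∫ x, |fprime N (groundW N x - Wl N lam x) - fprime N (Wl N lam x) -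
      fprime N (groundW N x)| ^ ((N : ℝ) / 2)) ≤ c ^ ((N : ℝ) / 2) := by
    refine (key lam hl1).trans ?_
    have hfin : K₀ * (c ^ ((N : ℝ) / 2) / (K₀ + 1)) ≤ c ^ ((N : ℝ) / 2) := by
      calc K₀ * (c ^ ((N : ℝ) / 2) / (K₀ + 1))
          ≤ (K₀ + 1) * (c ^ ((N : ℝ) / 2) / (K₀ + 1)) := by
            apply mul_le_mul_of_nonneg_right (by linarith) (by positivity)
        _ = c ^ ((N : ℝ) / 2) := by field_simp
    refine le_trans ?_ hfin
    refine (mul_le_mul_of_nonneg_left (h2'.trans_eq h3) hK₀0)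
  have hInt0 : 0 ≤ ∫ x, |fprime N (groundW N x - Wl N lam x) - fprime N (Wl N lam x) -
      fprime N (groundW N x)| ^ ((N : ℝ) / 2) :=
    integral_nonneg fun x => Real.rpow_nonneg (abs_nonneg _) _
  have h5 := Real.rpow_le_rpow hInt0 h4 (by positivity : (0:ℝ) ≤ (2:ℝ) / N)
  refine h5.trans ?_
  rw [← Real.rpow_mul hc.le, show (N : ℝ) / 2 * (2 / (N : ℝ)) = 1 from by field_simp,
    Real.rpow_one]
end
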